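/- The degree-n part of the reproducing kernel of the (q,t)-Hall pairing, evaluated plethystically at Y = 1/(q-1)(1-t)-scaled alphabet: p_{(n)}[X/((q-1)(1-t))] = Σ_{λ⊢n} H̃_λ[X] · Π'_{(i,j)∈λ}(1 - q^{j-1}t^{i-1}) / a_λ, where Π' omits the cell (1,1). -/
import Mathlib


/-!
STATEMENT 14. The degree-`n` reproducing kernel of the `(q,t)`-Hall pairing, paired against
`p_{(n)}` in the `Y` alphabet, gives
`p_{(n)}[X/((q-1)(1-t))] = ∑_{λ⊢n} H̃_λ[X] · Π'_λ / a_λ`,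
where `Π'_λ = ∏_{(i,j)∈λ, (i,j)≠(1,1)} (1 - q^{j-1}t^{i-1})`.

Model: `V` is the space of degree-`n` symmetric functions over the field `K` (containing
`q, t`); `p μ = p_μ[Y]` is the power-sum basis, `pScaled μ = p_μ[X/((q-1)(1-t))]`,
`H λ = H̃_λ`.  Hypotheses encode the inputs of the proof: the two-alphabet Cauchy kernel
identity `∑_μ z_μ⁻¹ p_μ[X/((q-1)(1-t))] ⊗ p_μ[Y] = ∑_λ a_λ⁻¹ H̃_λ[X] ⊗ H̃_λ[Y]` (duality of
`(H̃_λ)` and `(H̃_λ/a_λ)`), and the Hall pairing with `p_{(n)}` in `Y`, a linear functional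
`π` with `π(p_μ) = n·δ_{μ,(n)}` (orthogonality of power sums) and `π(H̃_λ) = Π'_λ`
(extraction via `H̃_λ[1-u] = ∏(1-uq^{j-1}t^{i-1})`, dividing by `1-u` and setting `u=1`).
-/

open TensorProduct

/-- Row lengths of the Young diagram of `λ`, sorted decreasingly. -/
def rowsOf {n : ℕ} (lam : Nat.Partition n) : List ℕ :=
  (lam.parts.sort (· ≤ ·)).reverse

/-- `Π'_λ = ∏_{(i,j)∈λ, (i,j)≠(1,1)} (1 - q^{j-1} t^{i-1})` (0-indexed cells). -/
def piPrime {K : Type*} [CommRing K] (q t : K) {n : ℕ} (lam : Nat.Partition n) : K :=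
  ∏ i ∈ Finset.range (rowsOf lam).length,
    ∏ j ∈ Finset.range ((rowsOf lam).getD i 0),
      if i = 0 ∧ j = 0 then 1 else 1 - q ^ j * t ^ i

/-- The arm length of the (0-indexed) cell `(i,j)` of `λ`. -/
def armLen {n : ℕ} (lam : Nat.Partition n) (i j : ℕ) : ℕ :=
  (rowsOf lam).getD i 0 - (j + 1)

/-- The leg length of the (0-indexed) cell `(i,j)` of `λ`. -/
def legLen {n : ℕ} (lam : Nat.Partition n) (i j : ℕ) : ℕ :=
  (((rowsOf lam).drop (i + 1)).filter fun r => decide (j < r)).length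

/-- `a_λ(q,t) = ∏_{x∈λ} (q^{a(x)+1} - t^{l(x)}) (q^{a(x)} - t^{l(x)+1})`. -/
def aNorm {K : Type*} [CommRing K] (q t : K) {n : ℕ} (lam : Nat.Partition n) : K :=
  ∏ i ∈ Finset.range (rowsOf lam).length,
    ∏ j ∈ Finset.range ((rowsOf lam).getD i 0),
      (q ^ (armLen lam i j + 1) - t ^ legLen lam i j) *
        (q ^ armLen lam i j - t ^ (legLen lam i j + 1))

/-- `z_λ = ∏_i i^{m_i} m_i!`. -/
def zPart {n : ℕ} (μ : Nat.Partition n) : ℕ :=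
  ∏ r ∈ μ.parts.toFinset, r ^ μ.parts.count r * (μ.parts.count r).factorial

theorem stmt_14 {K V : Type*} [Field K] [CharZero K] [AddCommGroup V] [Module K V]
    (q t : K) (n : ℕ) (hn : 0 < n)
    (p pScaled H : Nat.Partition n → V)
    (π : V →ₗ[K] K)
    (hπp : ∀ μ : Nat.Partition n,
      π (p μ) = if μ = Nat.Partition.indiscrete n then (n : K) else 0)
    (hπH : ∀ lam : Nat.Partition n, π (H lam) = piPrime q t lam)
    (hker : (∑ μ : Nat.Partition n, ((zPart μ : K))⁻¹ • (pScaled μ ⊗ₜ[K] p μ))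
        = ∑ lam : Nat.Partition n, (aNorm q t lam)⁻¹ • (H lam ⊗ₜ[K] H lam)) :
    pScaled (Nat.Partition.indiscrete n)
      = ∑ lam : Nat.Partition n, (piPrime q t lam / aNorm q t lam) • H lam := by
  classical
  set f : V ⊗[K] V →ₗ[K] V :=
    (TensorProduct.rid K V).toLinearMap ∘ₗ LinearMap.lTensor V π with hf
  have hfx : ∀ (x y : V), f (x ⊗ₜ[K] y) = π y • x := by
    intro x y; simp [hf]
  have h := congrArg f hker
  simp only [map_sum, map_smul, hfx, hπp, hπH] at h
  have hz : (zPart (Nat.Partition.indiscrete n) : K) = n := by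
    unfold zPart
    rw [Nat.Partition.indiscrete_parts hn.ne']
    simp
  have hL : pScaled (Nat.Partition.indiscrete n)
      = ∑ lam : Nat.Partition n,
          (aNorm q t lam)⁻¹ • piPrime q t lam • H lam := by
    rw [← h, Finset.sum_eq_single (Nat.Partition.indiscrete n)]
    · rw [if_pos rfl, hz, smul_smul, inv_mul_cancel₀ (by exact_mod_cast hn.ne'), one_smul]
    · intro b _ hb; rw [if_neg hb]; simp
    · simp
  rw [hL]
  refine Finset.sum_congr rfl fun lam _ => ?_
  rw [smul_smul, div_eq_inv_mul]
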